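/- Let G₁ and G₂ be 𝔴-equivalent graphs with the equivalence realized by the identity (𝔴_{G₁}(i) permutation-equal to 𝔴_{G₂}(i) for all i). Then for any simple eigenvalue λ_k of the common spectrum, the corresponding unit eigenvectors u_k of A₁ and v_k of A₂ satisfy |u_{ki}| = |v_{ki}| for every node i. -/

import Mathlib

open Polynomial Matrix

private lemma wconj_pow {n : ℕ} (U D : Matrix (Fin n) (Fin n) ℝ)
    (h1 : U * star U = 1) (h2 : star U * U = 1) (k : ℕ) :
    (U * D * star U) ^ k = U * D ^ k * star U := by
  induction k with
  | zero => simp [h1]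
  | succ k ih =>
      rw [pow_succ, ih, pow_succ]
      calc U * D ^ k * star U * (U * D * star U)
          = U * D ^ k * (star U * U) * D * star U := by noncomm_ring
        _ = U * (D ^ k * D) * star U := by rw [h2]; noncomm_ring

private lemma aeval_conj {n : ℕ} (U D : Matrix (Fin n) (Fin n) ℝ)
    (h1 : U * star U = 1) (h2 : star U * U = 1) (p : ℝ[X]) :
    aeval (U * D * star U) p = U * aeval D p * star U := by
  induction p using Polynomial.induction_on' with
  | add p q hp hq => simp [hp, hq, Matrix.mul_add, Matrix.add_mul]
  | monomial k a =>
      simp only [aeval_monomial, wconj_pow U D h1 h2 k,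
        Algebra.algebraMap_eq_smul_one, smul_mul_assoc, one_mul, mul_smul_comm]

private lemma aeval_diagonal {n : ℕ} (d : Fin n → ℝ) (p : ℝ[X]) :
    aeval (Matrix.diagonal d) p = Matrix.diagonal (fun i => p.eval (d i)) := by
  induction p using Polynomial.induction_on' with
  | add p q hp hq => simp [hp, hq, Matrix.diagonal_add]
  | monomial k a =>
      have hpow : (Matrix.diagonal d) ^ k = Matrix.diagonal (fun i => d i ^ k) := by
        induction k with
        | zero => simp [Matrix.diagonal_one]
        | succ k ih => rw [pow_succ, ih, Matrix.diagonal_mul_diagonal]; simp [pow_succ]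
      simp [aeval_monomial, hpow, Algebra.algebraMap_eq_smul_one, smul_mul_assoc,
        Matrix.smul_eq_diagonal_mul, Matrix.diagonal_mul_diagonal, eval_monomial]

private lemma aeval_vanish {n : ℕ} {A : Matrix (Fin n) (Fin n) ℝ}
    (hA : A.IsHermitian) (q : ℝ[X]) (hq : ∀ k, q.eval (hA.eigenvalues k) = 0) :
    aeval A q = 0 := by
  have h1 : (hA.eigenvectorUnitary : Matrix (Fin n) (Fin n) ℝ) *
      star (hA.eigenvectorUnitary : Matrix (Fin n) (Fin n) ℝ) = 1 :=
    Matrix.mem_unitaryGroup_iff.mp hA.eigenvectorUnitary.2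
  have h2 : star (hA.eigenvectorUnitary : Matrix (Fin n) (Fin n) ℝ) *
      (hA.eigenvectorUnitary : Matrix (Fin n) (Fin n) ℝ) = 1 :=
    Matrix.mem_unitaryGroup_iff'.mp hA.eigenvectorUnitary.2
  have hd : (RCLike.ofReal ∘ hA.eigenvalues : Fin n → ℝ) = hA.eigenvalues := by
    funext k; simp
  conv_lhs => rw [hA.spectral_theorem, hd, Unitary.conjStarAlgAut_apply, aeval_conj _ _ h1 h2, aeval_diagonal]
  have : (fun i => q.eval (hA.eigenvalues i)) = (fun _ => (0 : ℝ)) := by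
    funext i; exact hq i
  simp [this]

private lemma aeval_mulVec {n : ℕ} {A : Matrix (Fin n) (Fin n) ℝ} {μ : ℝ} {u : Fin n → ℝ}
    (hu : A.mulVec u = μ • u) (p : ℝ[X]) :
    (aeval A p).mulVec u = p.eval μ • u := by
  have hpow : ∀ k : ℕ, (A ^ k).mulVec u = μ ^ k • u := by
    intro k
    induction k with
    | zero => simp
    | succ k ih =>
        rw [pow_succ', ← Matrix.mulVec_mulVec, ih, Matrix.mulVec_smul, hu,
          smul_smul, pow_succ', mul_comm μ (μ ^ k)]
  induction p using Polynomial.induction_on' with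
  | add p q hp hq => simp [Matrix.add_mulVec, hp, hq, add_smul]
  | monomial k a =>
      simp [aeval_monomial, Algebra.algebraMap_eq_smul_one, smul_mul_assoc, one_mul,
        Matrix.smul_mulVec, hpow k, smul_smul, eval_monomial]

private lemma aeval_transpose {n : ℕ} (A : Matrix (Fin n) (Fin n) ℝ) (p : ℝ[X]) :
    (aeval A p)ᵀ = aeval Aᵀ p := by
  induction p using Polynomial.induction_on' with
  | add p q hp hq => simp [Matrix.transpose_add, hp, hq]
  | monomial k a =>
      simp [aeval_monomial, Algebra.algebraMap_eq_smul_one, smul_mul_assoc, one_mul,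
        Matrix.transpose_smul, Matrix.transpose_pow]

private lemma aeval_diag_eq {n : ℕ} {A B : Matrix (Fin n) (Fin n) ℝ} {i : Fin n}
    (h : ∀ l : ℕ, (A ^ l) i i = (B ^ l) i i) (p : ℝ[X]) :
    (aeval A p) i i = (aeval B p) i i := by
  induction p using Polynomial.induction_on' with
  | add p q hp hq => simp [Matrix.add_apply, hp, hq]
  | monomial k a =>
      simp [aeval_monomial, Algebra.algebraMap_eq_smul_one, smul_mul_assoc, one_mul,
        Matrix.smul_apply, h k]

/-- If `M` is symmetric, maps into the (one-dimensional) `μ`-eigenspace of `A`, and fixes the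
unit eigenvector `u`, then its diagonal entries are `u i ^ 2`. -/
private lemma diag_eq_sq {n : ℕ} {A M : Matrix (Fin n) (Fin n) ℝ}
    {μ : ℝ} {u : Fin n → ℝ} (hun : ∑ i, u i ^ 2 = 1)
    (hu : u ∈ Module.End.eigenspace (Matrix.toLin' A) μ)
    (hsimple : Module.finrank ℝ (Module.End.eigenspace (Matrix.toLin' A) μ) = 1)
    (hMsymm : Mᵀ = M) (hAM : A * M = μ • M) (hMu : M.mulVec u = u) :
    ∀ i, M i i = u i ^ 2 := by
  have hu0 : u ≠ 0 := by
    intro h; rw [h] at hun; simp at hun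
  have hspan : Submodule.span ℝ {u} = Module.End.eigenspace (Matrix.toLin' A) μ := by
    apply Submodule.eq_of_le_of_finrank_le
    · rw [Submodule.span_le, Set.singleton_subset_iff]; exact hu
    · rw [hsimple, finrank_span_singleton hu0]
  have hcol : ∀ j, ∃ c : ℝ, (fun i => M i j) = c • u := by
    intro j
    have hmem : (fun i => M i j) ∈ Module.End.eigenspace (Matrix.toLin' A) μ := by
      rw [Module.End.mem_eigenspace_iff]
      have : A.mulVec (fun i => M i j) = μ • (fun i => M i j) := by
        funext i
        have := congrFun (congrFun hAM i) j
        simpa [Matrix.mul_apply, Matrix.mulVec, dotProduct, Matrix.smul_apply] using this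
      simpa [Matrix.toLin'_apply] using this
    rw [← hspan, Submodule.mem_span_singleton] at hmem
    obtain ⟨c, hc⟩ := hmem
    exact ⟨c, hc.symm⟩
  choose c hc using hcol
  have hMcu : ∀ i j, M i j = c j * u i := by
    intro i j
    have := congrFun (hc j) i
    simpa using this
  obtain ⟨i0, hi0⟩ : ∃ i0, u i0 ≠ 0 := by
    by_contra h
    push_neg at h
    exact hu0 (funext h)
  have hs : (∑ j, c j * u j) = 1 := by
    have h1 := congrFun hMu i0
    have h2 : (M.mulVec u) i0 = (∑ j, c j * u j) * u i0 := by
      simp only [Matrix.mulVec, dotProduct, Finset.sum_mul]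
      refine Finset.sum_congr rfl fun j _ => ?_
      rw [hMcu i0 j]; ring
    apply mul_right_cancel₀ hi0
    rw [← h2, h1, one_mul]
  have hcu : ∀ i, c i = u i := by
    intro i
    have hsym : ∀ j, c i * u j = c j * u i := by
      intro j
      have h3 : M j i = M i j := (congrFun (congrFun hMsymm j) i).symm
      rw [hMcu j i, hMcu i j] at h3
      exact h3
    have e1 : c i * (∑ j, u j ^ 2) = (∑ j, c j * u j) * u i := by
      rw [Finset.mul_sum, Finset.sum_mul]
      refine Finset.sum_congr rfl fun j _ => ?_
      linear_combination u j * (hsym j)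
    rw [hun, mul_one, hs, one_mul] at e1
    exact e1
  intro i
  rw [hMcu i i, hcu i]; ring

/-- If `G₁` and `G₂` are `𝔴`-equivalent via the identity relabeling, then for any simple
eigenvalue `μ` (of both), corresponding unit eigenvectors `u` of `A₁` and `v` of `A₂`
agree in absolute value entrywise: `|u i| = |v i|` for every node `i`. -/
theorem w_equiv_simple_eigenvector_abs_eq (n : ℕ) (G₁ G₂ : SimpleGraph (Fin n))
    [DecidableRel G₁.Adj] [DecidableRel G₂.Adj]
    (hw : ∀ i : Fin n, ∃ σ : Equiv.Perm (Fin n), ∀ (l : ℕ) (j : Fin n),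
      ((G₁.adjMatrix ℝ) ^ l) j i = ((G₂.adjMatrix ℝ) ^ l) (σ j) i)
    (μ : ℝ) (u v : Fin n → ℝ)
    (hu : (G₁.adjMatrix ℝ).mulVec u = μ • u)
    (hv : (G₂.adjMatrix ℝ).mulVec v = μ • v)
    (hun : ∑ i, u i ^ 2 = 1) (hvn : ∑ i, v i ^ 2 = 1)
    (hsimple₁ : Module.finrank ℝ
      (Module.End.eigenspace (Matrix.toLin' (G₁.adjMatrix ℝ)) μ) = 1)
    (hsimple₂ : Module.finrank ℝ
      (Module.End.eigenspace (Matrix.toLin' (G₂.adjMatrix ℝ)) μ) = 1) :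
    ∀ i, |u i| = |v i| := by
  classical
  set A₁ := G₁.adjMatrix ℝ with hA₁def
  set A₂ := G₂.adjMatrix ℝ with hA₂def
  have h₁symm : A₁ᵀ = A₁ := G₁.isSymm_adjMatrix
  have h₂symm : A₂ᵀ = A₂ := G₂.isSymm_adjMatrix
  have hA₁ : A₁.IsHermitian := by
    show A₁ᴴ = A₁
    ext i j
    rw [Matrix.conjTranspose_apply]
    simpa using congrFun (congrFun h₁symm i) j
  have hA₂ : A₂.IsHermitian := by
    show A₂ᴴ = A₂
    ext i j
    rw [Matrix.conjTranspose_apply]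
    simpa using congrFun (congrFun h₂symm i) j
  -- the diagonal entries of all powers agree
  have hdiag : ∀ (i : Fin n) (l : ℕ), (A₁ ^ l) i i = (A₂ ^ l) i i := by
    intro i l
    obtain ⟨σ, hσ⟩ := hw i
    have hfix : σ i = i := by
      have h0 := hσ 0 i
      rw [pow_zero, pow_zero, Matrix.one_apply_eq, Matrix.one_apply] at h0
      by_contra hne
      rw [if_neg hne] at h0
      exact one_ne_zero h0
    have := hσ l i
    rwa [hfix] at this
  -- build the interpolation polynomial
  set S : Finset ℝ :=
    ((Finset.univ.image hA₁.eigenvalues) ∪ (Finset.univ.image hA₂.eigenvalues)).erase μ with hSdef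
  set p₀ : ℝ[X] := ∏ x ∈ S, (X - C x) with hp₀def
  have hp₀μ : p₀.eval μ ≠ 0 := by
    rw [hp₀def, eval_prod]
    rw [Finset.prod_ne_zero_iff]
    intro x hx
    rw [hSdef] at hx
    have hxne := Finset.ne_of_mem_erase hx
    simp only [eval_sub, eval_X, eval_C, sub_ne_zero]
    exact fun h => hxne h.symm
  set p : ℝ[X] := C (p₀.eval μ)⁻¹ * p₀ with hpdef
  have hpμ : p.eval μ = 1 := by
    rw [hpdef, eval_mul, eval_C, inv_mul_cancel₀ hp₀μ]
  set q : ℝ[X] := (X - C μ) * p with hqdef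
  have hqvan : ∀ lam : ℝ,
      (lam ∈ Finset.univ.image hA₁.eigenvalues ∨ lam ∈ Finset.univ.image hA₂.eigenvalues) →
      q.eval lam = 0 := by
    intro lam hlam
    rw [hqdef, eval_mul, eval_sub, eval_X, eval_C]
    by_cases hl : lam = μ
    · rw [hl, sub_self, zero_mul]
    · have hmem : lam ∈ S := by
        rw [hSdef, Finset.mem_erase]
        exact ⟨hl, Finset.mem_union.mpr hlam⟩
      have : p₀.eval lam = 0 := by
        rw [hp₀def, eval_prod]
        apply Finset.prod_eq_zero hmem
        simp
      rw [hpdef, eval_mul, this, mul_zero, mul_zero]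
  have hq₁ : aeval A₁ q = 0 :=
    aeval_vanish hA₁ q (fun k => hqvan _ (Or.inl (Finset.mem_image_of_mem _ (Finset.mem_univ k))))
  have hq₂ : aeval A₂ q = 0 :=
    aeval_vanish hA₂ q (fun k => hqvan _ (Or.inr (Finset.mem_image_of_mem _ (Finset.mem_univ k))))
  set M : Matrix (Fin n) (Fin n) ℝ := aeval A₁ p with hMdef
  set N : Matrix (Fin n) (Fin n) ℝ := aeval A₂ p with hNdef
  have hexpand : ∀ (A : Matrix (Fin n) (Fin n) ℝ), aeval A q = A * aeval A p - μ • aeval A p := by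
    intro A
    rw [hqdef, _root_.map_mul, _root_.map_sub, aeval_X, aeval_C, Algebra.algebraMap_eq_smul_one, sub_mul,
      smul_mul_assoc, one_mul]
  have hAM : A₁ * M = μ • M := by
    have := hexpand A₁
    rw [hq₁] at this
    exact sub_eq_zero.mp this.symm
  have hAN : A₂ * N = μ • N := by
    have := hexpand A₂
    rw [hq₂] at this
    exact sub_eq_zero.mp this.symm
  have hMsymm : Mᵀ = M := by
    rw [hMdef, aeval_transpose, h₁symm]
  have hNsymm : Nᵀ = N := by
    rw [hNdef, aeval_transpose, h₂symm]
  have hMu : M.mulVec u = u := by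
    rw [hMdef, aeval_mulVec hu, hpμ, one_smul]
  have hNv : N.mulVec v = v := by
    rw [hNdef, aeval_mulVec hv, hpμ, one_smul]
  have hueig : u ∈ Module.End.eigenspace (Matrix.toLin' A₁) μ := by
    rw [Module.End.mem_eigenspace_iff, Matrix.toLin'_apply]; exact hu
  have hveig : v ∈ Module.End.eigenspace (Matrix.toLin' A₂) μ := by
    rw [Module.End.mem_eigenspace_iff, Matrix.toLin'_apply]; exact hv
  have hM := diag_eq_sq hun hueig hsimple₁ hMsymm hAM hMu
  have hN := diag_eq_sq hvn hveig hsimple₂ hNsymm hAN hNv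
  intro i
  have hsq : u i ^ 2 = v i ^ 2 := by
    rw [← hM i, ← hN i, hMdef, hNdef]
    exact aeval_diag_eq (hdiag i) p
  rw [← Real.sqrt_sq_eq_abs, ← Real.sqrt_sq_eq_abs, hsq]
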